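/- arXiv:0912.1296 — 5 statements merged into one kernel-verified Lean document; each statement's English description precedes it below -/
import Mathlib

section
/- Let R be a unique factorization domain and let a, b, c ∈ R with a ≠ 0 and such that every common divisor of a, b, and c is a unit. Then the polynomial a·x² + b·x + c ∈ R[x] factors into two linear factors (i.e., there exist A, B, C, D ∈ R with a·x² + b·x + c = (A·x + B)·(C·x + D) as polynomials) if and only if there exist b₁, b₂ ∈ R such that b₁·b₂ = a·c and b₁ + b₂ = b. -/
theorem quadratic_factors_iff_split_middle
    {R : Type*} [CommRing R] [IsDomain R] [UniqueFactorizationMonoid R]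
    (a b c : R) (ha : a ≠ 0)
    (hcop : ∀ d : R, d ∣ a → d ∣ b → d ∣ c → IsUnit d) :
    (∃ A B C D : R,
      Polynomial.C a * Polynomial.X ^ 2 + Polynomial.C b * Polynomial.X + Polynomial.C c
        = (Polynomial.C A * Polynomial.X + Polynomial.C B) *
          (Polynomial.C C * Polynomial.X + Polynomial.C D)) ↔
    (∃ b₁ b₂ : R, b₁ * b₂ = a * c ∧ b₁ + b₂ = b) := by
  constructor
  · rintro ⟨A, B, C, D, h⟩
    have h' : Polynomial.C a * Polynomial.X ^ 2 + Polynomial.C b * Polynomial.X + Polynomial.C c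
        = Polynomial.C (A * C) * Polynomial.X ^ 2
          + Polynomial.C (A * D + B * C) * Polynomial.X + Polynomial.C (B * D) := by
      rw [h]; simp only [map_add, map_mul]; ring
    have h2 := congrArg (fun p => Polynomial.coeff p 2) h'
    have h1 := congrArg (fun p => Polynomial.coeff p 1) h'
    have h0 := congrArg (fun p => Polynomial.coeff p 0) h'
    simp only [Polynomial.coeff_add, Polynomial.coeff_C_mul, Polynomial.coeff_X_pow,
      Polynomial.coeff_C, Polynomial.coeff_X_one, Polynomial.coeff_X_zero,
      Polynomial.coeff_X] at h2 h1 h0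
    norm_num at h2 h1 h0
    exact ⟨A * D, B * C, by rw [h2, h0]; ring, by rw [h1]⟩
  · rintro ⟨b₁, b₂, hmul, hadd⟩
    letI : GCDMonoid R := UniqueFactorizationMonoid.toGCDMonoid R
    obtain ⟨a₂, u, ha₂, hu, hunit⟩ := extract_gcd a b₁
    set g := gcd a b₁ with hgdef
    clear_value g
    have hg : g ≠ 0 := by rintro rfl; exact ha (by rw [ha₂, zero_mul])
    have ha₂0 : a₂ ≠ 0 := by rintro rfl; exact ha (by rw [ha₂, mul_zero])
    have key : u * b₂ = a₂ * c := by
      have : g * (u * b₂) = g * (a₂ * c) := by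
        rw [← mul_assoc, ← mul_assoc, ← hu, ← ha₂, hmul]
      exact mul_left_cancel₀ hg this
    obtain ⟨d₁, d₂, hd₁, hd₂, hsplit⟩ :=
      exists_dvd_and_dvd_of_dvd_mul (show a₂ ∣ u * b₂ from ⟨c, key⟩)
    have hd₁u : IsUnit d₁ :=
      isUnit_of_dvd_unit (dvd_gcd ⟨d₂, hsplit⟩ hd₁) hunit
    have ha₂b₂ : a₂ ∣ b₂ := by
      obtain ⟨w, hw⟩ := hd₂
      obtain ⟨e, he⟩ := hd₁u.exists_right_inv
      exact ⟨e * w, by rw [hw, hsplit, show d₁ * d₂ * (e * w) = (d₁ * e) * (d₂ * w) by ring,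
        he, one_mul]⟩
    obtain ⟨v, hv⟩ := ha₂b₂
    have huv : u * v = c := by
      have : a₂ * (u * v) = a₂ * c := by rw [← key, hv]; ring
      exact mul_left_cancel₀ ha₂0 this
    refine ⟨g, v, a₂, u, ?_⟩
    have hb : b = g * u + a₂ * v := by rw [← hadd, hu, hv]
    rw [ha₂, hb, ← huv]
    simp only [map_add, map_mul]
    ring
end

section
/- Let R be a unique factorization domain and let a, b, c ∈ R with a ≠ 0 and such that every common divisor of a, b, and c is a unit. Suppose b₁, b₂ ∈ R satisfy b₁·b₂ = a·c and b₁ + b₂ = b. Then there exist A, B, C, D ∈ R such that A·C = a, A·D = b₁, B·C = b₂, and B·D = c. -/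
theorem exists_ABCD_of_split_middle
    {R : Type*} [CommRing R] [IsDomain R] [UniqueFactorizationMonoid R]
    (a b c : R) (ha : a ≠ 0)
    (hcop : ∀ d : R, d ∣ a → d ∣ b → d ∣ c → IsUnit d)
    (b₁ b₂ : R) (hmul : b₁ * b₂ = a * c) (hadd : b₁ + b₂ = b) :
    ∃ A B C D : R, A * C = a ∧ A * D = b₁ ∧ B * C = b₂ ∧ B * D = c := by
  classical
  letI := UniqueFactorizationMonoid.normalizationMonoid (α := R)
  letI := UniqueFactorizationMonoid.toGCDMonoid R
  obtain ⟨C, D, hC, hD, hCD⟩ := extract_gcd a b₁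
  set A := gcd a b₁ with hA
  have hA0 : A ≠ 0 := fun h => ha (by simpa [h] using hC)
  have hC0 : C ≠ 0 := fun h => ha (by simpa [h] using hC)
  -- A * D * b₂ = A * C * c
  have key : A * (D * b₂) = A * (C * c) := by
    rw [← mul_assoc, ← mul_assoc, ← hD, ← hC, hmul]
  have key' : D * b₂ = C * c := mul_left_cancel₀ hA0 key
  have hrel : IsRelPrime C D := gcd_isUnit_iff_isRelPrime.mp hCD
  have hdvd : C ∣ b₂ := hrel.dvd_of_dvd_mul_left ⟨c, key'⟩
  obtain ⟨B, hB⟩ := hdvd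
  refine ⟨A, B, C, D, hC.symm, hD.symm, by rw [hB, mul_comm], ?_⟩
  have : C * (B * D) = C * c := by rw [← key', hB]; ring
  exact mul_left_cancel₀ hC0 this
end

section
/- Let R be a unique factorization domain and let a, b, c ∈ R with a ≠ 0 and such that every common divisor of a, b, and c is a unit. If there exist b₁, b₂ ∈ R such that b₁·b₂ = a·c and b₁ + b₂ = b, then there exist A, B, C, D ∈ R with a·x² + b·x + c = (A·x + B)·(C·x + D) as an equality in R[x]. -/
theorem factors_of_split_middle
    {R : Type*} [CommRing R] [IsDomain R] [UniqueFactorizationMonoid R]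
    (a b c : R) (ha : a ≠ 0)
    (hcop : ∀ d : R, d ∣ a → d ∣ b → d ∣ c → IsUnit d)
    (h : ∃ b₁ b₂ : R, b₁ * b₂ = a * c ∧ b₁ + b₂ = b) :
    ∃ A B C D : R,
      Polynomial.C a * Polynomial.X ^ 2 + Polynomial.C b * Polynomial.X + Polynomial.C c
        = (Polynomial.C A * Polynomial.X + Polynomial.C B) *
          (Polynomial.C C * Polynomial.X + Polynomial.C D) := by
  letI : NormalizationMonoid R := (UniqueFactorizationMonoid.normalizationMonoid (α := R)).toNormalizationMonoid
  letI : GCDMonoid R := UniqueFactorizationMonoid.toGCDMonoid R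
  obtain ⟨b₁, b₂, hmul, hadd⟩ := h
  obtain ⟨C, D, hC, hD, hu⟩ := extract_gcd a b₁
  set g := gcd a b₁ with hg
  have hgne : g ≠ 0 := fun h0 => ha (by rw [hC, h0, zero_mul])
  have hCne : C ≠ 0 := fun h0 => ha (by rw [hC, h0, mul_zero])
  have hrel : IsRelPrime C D := fun d hdC hdD =>
    isUnit_of_dvd_unit (dvd_gcd hdC hdD) hu
  -- D * b₂ = C * c
  have key : D * b₂ = C * c := by
    have : g * (D * b₂) = g * (C * c) := by
      rw [← mul_assoc, ← hD, hmul, hC]; ring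
    exact mul_left_cancel₀ hgne this
  have hCdvd : C ∣ b₂ := hrel.dvd_of_dvd_mul_left ⟨c, key⟩
  obtain ⟨E, hE⟩ := hCdvd
  have hc : c = D * E := by
    have : C * c = C * (D * E) := by rw [← key, hE]; ring
    exact mul_left_cancel₀ hCne this
  refine ⟨g, E, C, D, ?_⟩
  have hb : b = g * D + C * E := by rw [← hadd, hD, hE]
  rw [hC, hb, hc]
  simp only [map_mul, map_add]
  ring
end

section
/- Let R be a unique factorization domain and let a, b, c ∈ R with a ≠ 0 and such that every common divisor of a, b, and c is a unit. If there exist b₁, b₂ ∈ R such that b₁·b₂ = a·c and b₁ + b₂ = b, then there exist A, B, C, D ∈ R with a·x² + b·x + c = (A·x + B)·(C·x + D) in R[x], and moreover A, B, C, D can be chosen so that every common divisor of A and B is a unit and every common divisor of C and D is a unit. -/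
theorem factors_primitively_of_split_middle
    {R : Type*} [CommRing R] [IsDomain R] [UniqueFactorizationMonoid R]
    (a b c : R) (ha : a ≠ 0)
    (hcop : ∀ d : R, d ∣ a → d ∣ b → d ∣ c → IsUnit d)
    (h : ∃ b₁ b₂ : R, b₁ * b₂ = a * c ∧ b₁ + b₂ = b) :
    ∃ A B C D : R,
      (Polynomial.C a * Polynomial.X ^ 2 + Polynomial.C b * Polynomial.X + Polynomial.C c
        = (Polynomial.C A * Polynomial.X + Polynomial.C B) *
          (Polynomial.C C * Polynomial.X + Polynomial.C D)) ∧
      (∀ d : R, d ∣ A → d ∣ B → IsUnit d) ∧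
      (∀ d : R, d ∣ C → d ∣ D → IsUnit d) := by
  classical
  letI := UniqueFactorizationMonoid.normalizationMonoid (α := R)
  letI := UniqueFactorizationMonoid.toNormalizedGCDMonoid R
  obtain ⟨b₁, b₂, hmul, hsum⟩ := h
  set g := gcd a b₁ with hg
  have hga : g ∣ a := gcd_dvd_left a b₁
  have hgb : g ∣ b₁ := gcd_dvd_right a b₁
  obtain ⟨p, hp⟩ := hga
  obtain ⟨q, hq⟩ := hgb
  have hg0 : g ≠ 0 := by
    intro h0
    apply ha
    rw [hp, h0, zero_mul]
  -- p and q are relatively prime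
  have hrel : IsRelPrime p q := by
    intro d hdp hdq
    have h1 : g * d ∣ a := by rw [hp]; exact mul_dvd_mul_left g hdp
    have h2 : g * d ∣ b₁ := by rw [hq]; exact mul_dvd_mul_left g hdq
    have h3 : g * d ∣ g := dvd_gcd h1 h2
    have : g * d ∣ g * 1 := by rwa [mul_one]
    exact isUnit_of_dvd_one ((mul_dvd_mul_iff_left hg0).mp this)
  have key : q * b₂ = p * c := by
    have : g * (q * b₂) = g * (p * c) := by
      rw [← mul_assoc, ← mul_assoc, ← hq, ← hp, hmul]
    exact mul_left_cancel₀ hg0 this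
  have hpb₂ : p ∣ b₂ := hrel.dvd_of_dvd_mul_left ⟨c, key⟩
  obtain ⟨t, ht⟩ := hpb₂
  have hp0 : p ≠ 0 := by
    intro h0; apply ha; rw [hp, h0, mul_zero]
  have hc : c = q * t := by
    have : p * (q * t) = p * c := by rw [← key, ht]; ring
    exact (mul_left_cancel₀ hp0 this).symm
  refine ⟨g, t, p, q, ?_, ?_, ?_⟩
  · rw [hp, ← hsum, hq, ht, hc]
    simp only [map_mul, map_add]
    ring
  · intro d hdg hdt
    refine hcop d ?_ ?_ ?_
    · rw [hp]; exact hdg.mul_right p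
    · rw [← hsum, hq, ht]
      exact dvd_add (hdg.mul_right q) (hdt.mul_left p)
    · rw [hc]; exact hdt.mul_left q
  · exact hrel
end

section
/- Let R be a unique factorization domain and let a, b, c ∈ R with a ≠ 0 and such that every common divisor of a, b, and c is a unit. Then the polynomial a·x² + b·x + c factors into two linear factors in R[x] if and only if the monic polynomial x² + b·x + a·c factors into two monic linear factors, i.e., there exist b₁, b₂ ∈ R with x² + b·x + a·c = (x + b₁)·(x + b₂) in R[x]. -/
open Polynomial

lemma quad_eq_coeffs {R : Type*} [CommRing R] [IsDomain R] {a b c a' b' c' : R}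
    (h : Polynomial.C a * Polynomial.X ^ 2 + Polynomial.C b * Polynomial.X + Polynomial.C c
       = Polynomial.C a' * Polynomial.X ^ 2 + Polynomial.C b' * Polynomial.X + Polynomial.C c') :
    a = a' ∧ b = b' ∧ c = c' := by
  refine ⟨?_, ?_, ?_⟩
  · have := congrArg (fun p => Polynomial.coeff p 2) h
    simpa using this
  · have := congrArg (fun p => Polynomial.coeff p 1) h
    simpa using this
  · have := congrArg (fun p => Polynomial.coeff p 0) h
    simpa using this

theorem quadratic_factors_iff_monic_factors
    {R : Type*} [CommRing R] [IsDomain R] [UniqueFactorizationMonoid R]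
    (a b c : R) (ha : a ≠ 0)
    (hcop : ∀ d : R, d ∣ a → d ∣ b → d ∣ c → IsUnit d) :
    (∃ A B C D : R,
      Polynomial.C a * Polynomial.X ^ 2 + Polynomial.C b * Polynomial.X + Polynomial.C c
        = (Polynomial.C A * Polynomial.X + Polynomial.C B) *
          (Polynomial.C C * Polynomial.X + Polynomial.C D)) ↔
    (∃ b₁ b₂ : R,
      Polynomial.X ^ 2 + Polynomial.C b * Polynomial.X + Polynomial.C (a * c)
        = (Polynomial.X + Polynomial.C b₁) * (Polynomial.X + Polynomial.C b₂)) := by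
  constructor
  · rintro ⟨A, B, C, D, h⟩
    have h' : Polynomial.C a * Polynomial.X ^ 2 + Polynomial.C b * Polynomial.X + Polynomial.C c
        = Polynomial.C (A*C) * Polynomial.X ^ 2 + Polynomial.C (A*D + B*C) * Polynomial.X
          + Polynomial.C (B*D) := by rw [h]; simp only [map_mul, map_add]; ring
    obtain ⟨h1, h2, h3⟩ := quad_eq_coeffs h'
    refine ⟨A*D, B*C, ?_⟩
    simp only [map_mul, map_add]
    rw [h1, h2, h3]
    simp only [map_mul, map_add]
    ring
  · rintro ⟨b₁, b₂, h⟩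
    have h' : Polynomial.C (1:R) * Polynomial.X ^ 2 + Polynomial.C b * Polynomial.X
          + Polynomial.C (a * c)
        = Polynomial.C (1:R) * Polynomial.X ^ 2 + Polynomial.C (b₁ + b₂) * Polynomial.X
          + Polynomial.C (b₁ * b₂) := by
      simp only [map_one, one_mul]
      rw [h]; simp only [map_mul, map_add]; ring
    obtain ⟨-, h2, h3⟩ := quad_eq_coeffs h'
    obtain ⟨a', b₁', d, hrp, hda, hdb⟩ :=
      UniqueFactorizationMonoid.exists_reduced_factors a ha b₁
    have hd : d ≠ 0 := fun h => ha (by rw [← hda, h, zero_mul])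
    have ha' : a' ≠ 0 := fun h => ha (by rw [← hda, h, mul_zero])
    -- b₁' * b₂ = a' * c
    have key : b₁' * b₂ = a' * c := by
      have : d * (b₁' * b₂) = d * (a' * c) := by
        rw [← mul_assoc, ← mul_assoc, hdb, hda, h3]
      exact mul_left_cancel₀ hd this
    have hdvd : a' ∣ b₂ := by
      refine hrp.dvd_of_dvd_mul_left ?_
      exact ⟨c, by linear_combination key⟩
    obtain ⟨D, hD⟩ := hdvd
    have hcD : b₁' * D = c := by
      apply mul_left_cancel₀ ha'
      rw [← mul_assoc, mul_comm a' b₁', mul_assoc, ← hD, key]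
    refine ⟨a', b₁', d, D, ?_⟩
    have hA : a = a' * d := by rw [← hda, mul_comm]
    have hB : b = a' * D + b₁' * d := by
      rw [h2, ← hD, ← hdb]; ring
    rw [hA, hB, ← hcD]
    simp only [map_mul, map_add]
    ring
end
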